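/- Let M(z) = b/(cz + d) with b, c ≠ 0. Then Stirling's method equals St_M(z) = z + ((cz+d)² - bc)²/(c(cz+d)³), which is a rational map of degree 4. -/

import Mathlib

open Filter Topology

lemma stirling_aux_deriv_at_pole (b c d : ℂ) (hb : b ≠ 0) (hc : c ≠ 0) (w : ℂ)
    (hw : c * w + d = 0) : deriv (fun z : ℂ => b / (c * z + d)) w = 0 := by
  apply deriv_zero_of_not_differentiableAt
  intro h
  have hcont : ContinuousAt (fun z : ℂ => b / (c * z + d)) w := h.continuousAt
  have hg : ContinuousAt (fun z : ℂ => (c * z + d) * (b / (c * z + d))) w :=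
    (((continuous_const.mul continuous_id).add continuous_const).continuousAt).mul hcont
  have h0 : Tendsto (fun z : ℂ => (c * z + d) * (b / (c * z + d))) (𝓝[≠] w)
      (𝓝 ((c * w + d) * (b / (c * w + d)))) :=
    hg.tendsto.mono_left nhdsWithin_le_nhds
  rw [hw, zero_mul] at h0
  have hb' : Tendsto (fun z : ℂ => (c * z + d) * (b / (c * z + d))) (𝓝[≠] w) (𝓝 b) := by
    apply Tendsto.congr' _ tendsto_const_nhds
    filter_upwards [self_mem_nhdsWithin] with z hz
    have hne : c * z + d ≠ 0 := by
      intro h'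
      apply hz
      have : c * (z - w) = 0 := by ring_nf; linear_combination h' - hw
      rcases mul_eq_zero.mp this with h | h
      · exact absurd h hc
      · simpa [sub_eq_zero] using h
    field_simp
  exact hb (tendsto_nhds_unique hb' h0)

lemma stirling_aux_deriv_at_reg (b c d : ℂ) (w : ℂ) (hw : c * w + d ≠ 0) :
    deriv (fun z : ℂ => b / (c * z + d)) w = -(b * c) / (c * w + d) ^ 2 := by
  have h1 : HasDerivAt (fun z : ℂ => c * z + d) c w := by
    simpa using ((hasDerivAt_id w).const_mul c).add_const d
  have h2 := (hasDerivAt_const w b).div h1 hw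
  rw [show deriv (fun z : ℂ => b / (c * z + d)) w = _ from h2.deriv]
  ring

open Polynomial in
/-- For `M z = b/(cz + d)` with `b, c ≠ 0`, Stirling's method equals
`St_M z = z + ((cz+d)² - bc)²/(c(cz+d)³)`, a rational map of degree 4
(numerator of degree 4, denominator of degree 3, coprime). -/
theorem stirling_mobius_a_zero_formula_degree (b c d : ℂ) (hb : b ≠ 0)
    (hc : c ≠ 0) :
    let M : ℂ → ℂ := fun z => b / (c * z + d)
    let St : ℂ → ℂ := fun z => z - M z / deriv M (z - M z)
    let N : Polynomial ℂ :=
      C c * X * (C c * X + C d) ^ 3 + ((C c * X + C d) ^ 2 - C (b * c)) ^ 2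
    let D : Polynomial ℂ := C c * (C c * X + C d) ^ 3
    (∀ z : ℂ, c * z + d ≠ 0 →
        St z = z + ((c * z + d) ^ 2 - b * c) ^ 2 / (c * (c * z + d) ^ 3)) ∧
      (∀ z : ℂ, c * z + d ≠ 0 → St z = N.eval z / D.eval z) ∧
      N.natDegree = 4 ∧ D.natDegree = 3 ∧ IsCoprime N D := by
  intro M St N D
  have key : ∀ z : ℂ, c * z + d ≠ 0 →
      St z = z + ((c * z + d) ^ 2 - b * c) ^ 2 / (c * (c * z + d) ^ 3) := by
    intro z hz
    have hMz : M z = b / (c * z + d) := rfl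
    have hw : c * (z - M z) + d = ((c * z + d) ^ 2 - b * c) / (c * z + d) := by
      rw [hMz]; field_simp; ring
    by_cases h0 : (c * z + d) ^ 2 - b * c = 0
    · have hw0 : c * (z - M z) + d = 0 := by rw [hw, h0, zero_div]
      have hd : deriv M (z - M z) = 0 := stirling_aux_deriv_at_pole b c d hb hc _ hw0
      show z - M z / deriv M (z - M z) = _
      rw [hd, h0]
      simp
    · have hw0 : c * (z - M z) + d ≠ 0 := by rw [hw]; exact div_ne_zero h0 hz
      have hd : deriv M (z - M z) = -(b * c) / (c * (z - M z) + d) ^ 2 :=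
        stirling_aux_deriv_at_reg b c d _ hw0
      show z - M z / deriv M (z - M z) = _
      rw [hd, hw, hMz]
      have hbc : b * c ≠ 0 := mul_ne_zero hb hc
      field_simp
      ring
  refine ⟨key, ?_, ?_, ?_, ?_⟩
  · intro z hz
    rw [key z hz]
    have hD : (c * z + d) ^ 3 ≠ 0 := pow_ne_zero _ hz
    simp only [N, D, eval_add, eval_mul, eval_pow, eval_sub, eval_C, eval_X]
    rw [eq_div_iff (mul_ne_zero hc hD), add_mul, div_mul_cancel₀ _ (mul_ne_zero hc hD)]
    ring
  · show (C c * X * (C c * X + C d) ^ 3 +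
        ((C c * X + C d) ^ 2 - C (b * c)) ^ 2).natDegree = 4
    compute_degree!
    ring_nf
    exact mul_ne_zero (pow_ne_zero 4 hc) two_ne_zero
  · show (C c * (C c * X + C d) ^ 3).natDegree = 3
    compute_degree!
  · show IsCoprime (C c * X * (C c * X + C d) ^ 3 + ((C c * X + C d) ^ 2 - C (b * c)) ^ 2)
      (C c * (C c * X + C d) ^ 3)
    set z0 : ℂ := -d / c with hz0
    have hcz0 : c * z0 + d = 0 := by rw [hz0]; field_simp; ring
    have hlin : (C c * X + C d : Polynomial ℂ) = C c * (X - C z0) := by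
      rw [mul_sub, ← C_mul, show c * z0 = -d by linear_combination hcz0, C_neg, sub_neg_eq_add]
    set N' : Polynomial ℂ :=
      C c * X * (C c * X + C d) ^ 3 + ((C c * X + C d) ^ 2 - C (b * c)) ^ 2 with hN'
    have hcop : IsCoprime (X - C z0) N' := by
      rw [(irreducible_X_sub_C z0).coprime_iff_not_dvd, dvd_iff_isRoot]
      intro hroot
      have h1 : N'.eval z0 = 0 := hroot
      rw [hN'] at h1
      simp only [eval_add, eval_mul, eval_pow, eval_sub, eval_C, eval_X] at h1
      rw [hcz0] at h1
      simp [hb, hc] at h1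
    have hD : (C c * (C c * X + C d) ^ 3 : Polynomial ℂ) = C (c * c ^ 3) * (X - C z0) ^ 3 := by
      rw [hlin, mul_pow, ← C_pow, ← mul_assoc, ← C_mul]
    rw [hD, isCoprime_mul_unit_left_right (isUnit_C.mpr
      (mul_ne_zero hc (pow_ne_zero _ hc)).isUnit)]
    exact hcop.symm.pow_right
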